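/- For every integer d ≥ 2 there exists a real number c_coll > 0 such that: (i) for every c with 0 < c < c_coll, the only solution t ∈ [0,1] of 1 - exp(-c·t^d) = t is t = 0; and (ii) for every c > c_coll there are exactly two solutions t ∈ (0,1) of 1 - exp(-c·t^d) = t. -/

import Mathlib

open Real Set

noncomputable def auxPhi (d : ℕ) (t : ℝ) : ℝ := t / (1 - t) + d * Real.log (1 - t)
noncomputable def auxH (d : ℕ) (t : ℝ) : ℝ := -Real.log (1 - t) / t ^ d

lemma auxPhi_hasDerivAt (d : ℕ) {x : ℝ} (hx : x < 1) :
    HasDerivAt (auxPhi d) (1 / (1 - x) ^ 2 - d / (1 - x)) x := by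
  have hne : (1 : ℝ) - x ≠ 0 := by linarith
  have h1 : HasDerivAt (fun t : ℝ => t / (1 - t))
      ((1 * (1 - x) - x * (-1)) / (1 - x) ^ 2) x :=
    (hasDerivAt_id x).div ((hasDerivAt_id x).const_sub 1) hne
  have hlog : HasDerivAt (fun t : ℝ => Real.log (1 - t)) ((1 - x)⁻¹ * (-1)) x :=
    (Real.hasDerivAt_log hne).comp x ((hasDerivAt_id x).const_sub 1)
  have := h1.add (hlog.const_mul (d : ℝ))
  refine this.congr_deriv ?_
  field_simp
  ring

lemma auxH_hasDerivAt (d : ℕ) (hd : 2 ≤ d) {x : ℝ} (hx0 : 0 < x) (hx1 : x < 1) :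
    HasDerivAt (auxH d) (auxPhi d x / x ^ (d + 1)) x := by
  obtain ⟨e, rfl⟩ : ∃ e, d = e + 2 := ⟨d - 2, by omega⟩
  have hne : (1 : ℝ) - x ≠ 0 := by linarith
  have hxne : x ≠ 0 := ne_of_gt hx0
  have hlog : HasDerivAt (fun t : ℝ => -Real.log (1 - t)) ((1 - x)⁻¹) x := by
    have := ((Real.hasDerivAt_log hne).comp x ((hasDerivAt_id x).const_sub 1)).neg
    refine this.congr_deriv ?_; ring
  have hpow : HasDerivAt (fun t : ℝ => t ^ (e + 2)) ((e + 2 : ℕ) * x ^ (e + 1)) x := by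
    simpa using hasDerivAt_pow (e + 2) x
  have hx2 : x ^ (e + 2) ≠ 0 := pow_ne_zero _ hxne
  have := hlog.div hpow hx2
  refine this.congr_deriv ?_
  rw [auxPhi]
  field_simp
  ring

lemma auxPhi_zero (d : ℕ) : auxPhi d 0 = 0 := by simp [auxPhi]

lemma auxPhi_contOn (d : ℕ) {s : Set ℝ} (hs : s ⊆ Iio 1) : ContinuousOn (auxPhi d) s :=
  fun x hx => ((auxPhi_hasDerivAt d (hs hx)).continuousAt).continuousWithinAt

lemma auxPhi_strictAntiOn (d : ℕ) (hd : 2 ≤ d) :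
    StrictAntiOn (auxPhi d) (Icc 0 (1 - 1 / (d : ℝ))) := by
  have hd0 : (0 : ℝ) < d := by positivity
  have hlt : 1 - 1 / (d : ℝ) < 1 := by
    have : 0 < 1 / (d : ℝ) := by positivity
    linarith
  apply strictAntiOn_of_deriv_neg (convex_Icc _ _)
    (auxPhi_contOn d (fun x hx => lt_of_le_of_lt hx.2 hlt))
  intro x hx
  rw [interior_Icc] at hx
  have hx1 : x < 1 := lt_trans hx.2 hlt
  rw [(auxPhi_hasDerivAt d hx1).deriv]
  have h1x : 0 < 1 - x := by linarith
  have hkey : 1 < (d : ℝ) * (1 - x) := by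
    have h2 : 1 / (d : ℝ) < 1 - x := by linarith [hx.2]
    calc (1 : ℝ) = d * (1 / d) := by field_simp
    _ < d * (1 - x) := mul_lt_mul_of_pos_left h2 hd0
  have e1 : 1 / (1 - x) ^ 2 - (d : ℝ) / (1 - x) = (1 - d * (1 - x)) / (1 - x) ^ 2 := by
    field_simp
  rw [e1]
  apply div_neg_of_neg_of_pos (by linarith) (by positivity)

lemma auxPhi_strictMonoOn (d : ℕ) (hd : 2 ≤ d) :
    StrictMonoOn (auxPhi d) (Ico (1 - 1 / (d : ℝ)) 1) := by
  have hd0 : (0 : ℝ) < d := by positivity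
  apply strictMonoOn_of_deriv_pos (convex_Ico _ _)
    (auxPhi_contOn d (fun x hx => hx.2))
  intro x hx
  rw [interior_Ico] at hx
  have hx1 : x < 1 := hx.2
  rw [(auxPhi_hasDerivAt d hx1).deriv]
  have h1x : 0 < 1 - x := by linarith
  have hkey : (d : ℝ) * (1 - x) < 1 := by
    have h2 : 1 - x < 1 / (d : ℝ) := by linarith [hx.1]
    calc (d : ℝ) * (1 - x) < d * (1 / d) := mul_lt_mul_of_pos_left h2 hd0
    _ = 1 := by field_simp
  have e1 : 1 / (1 - x) ^ 2 - (d : ℝ) / (1 - x) = (1 - d * (1 - x)) / (1 - x) ^ 2 := by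
    field_simp
  rw [e1]
  apply div_pos (by linarith) (by positivity)

lemma auxPhi_neg_at_a (d : ℕ) (hd : 2 ≤ d) : auxPhi d (1 - 1 / (d : ℝ)) < 0 := by
  have hd0 : (0 : ℝ) < d := by positivity
  have hd1 : (1 : ℝ) < d := by exact_mod_cast by omega
  have hlog : Real.log (1 / (d : ℝ)) < 1 / d - 1 :=
    Real.log_lt_sub_one_of_pos (by positivity) (by
      intro h
      rw [div_eq_one_iff_eq (ne_of_gt hd0)] at h
      exact absurd h (ne_of_lt hd1))
  have e1 : (1 : ℝ) - (1 - 1 / d) = 1 / d := by ring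
  rw [auxPhi, e1]
  have e2 : (1 - 1 / (d : ℝ)) / (1 / d) = d - 1 := by field_simp
  rw [e2]
  nlinarith

lemma auxPhi_pos_at_b (d : ℕ) (hd : 2 ≤ d) :
    auxPhi d (1 - 1 / ((2 * d + 1: ℕ) : ℝ) ^ 2) > 0 := by
  set m : ℝ := ((2 * d + 1 : ℕ) : ℝ) with hm
  have hm1 : (1 : ℝ) < m := by rw [hm]; exact_mod_cast by omega
  have hm0 : (0 : ℝ) < m := by linarith
  have e1 : (1 : ℝ) - (1 - 1 / m ^ 2) = 1 / m ^ 2 := by ring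
  rw [auxPhi, e1]
  have e2 : (1 - 1 / m ^ 2) / (1 / m ^ 2) = m ^ 2 - 1 := by field_simp
  have e3 : Real.log (1 / m ^ 2) = -(2 * Real.log m) := by
    rw [one_div, Real.log_inv, Real.log_pow]; push_cast; ring
  rw [e2, e3]
  have hlogm : Real.log m ≤ m - 1 := Real.log_le_sub_one_of_pos hm0
  have hdm : 2 * (d : ℝ) + 1 = m := by rw [hm]; push_cast; ring
  have hd0 : (0 : ℝ) < d := by positivity
  nlinarith [sq_nonneg (m - 1)]

lemma exists_t0 (d : ℕ) (hd : 2 ≤ d) :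
    ∃ t0 : ℝ, 0 < t0 ∧ t0 < 1 ∧ auxPhi d t0 = 0 ∧
      (∀ u, 0 < u → u < t0 → auxPhi d u < 0) ∧
      (∀ u, t0 < u → u < 1 → 0 < auxPhi d u) := by
  have hd0 : (0 : ℝ) < d := by positivity
  set a : ℝ := 1 - 1 / (d : ℝ) with ha
  set b : ℝ := 1 - 1 / ((2 * d + 1 : ℕ) : ℝ) ^ 2 with hb
  have hdR : (2 : ℝ) ≤ d := by exact_mod_cast hd
  have ha0 : 0 < a := by
    rw [ha]
    have : 1 / (d : ℝ) ≤ 1 / 2 := by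
      apply one_div_le_one_div_of_le <;> linarith
    linarith
  have hm : (d : ℝ) < ((2 * d + 1 : ℕ) : ℝ) ^ 2 := by
    push_cast; nlinarith
  have hab : a < b := by
    rw [ha, hb]
    have : 1 / ((2 * d + 1 : ℕ) : ℝ) ^ 2 < 1 / (d : ℝ) :=
      one_div_lt_one_div_of_lt hd0 hm
    linarith
  have hb1 : b < 1 := by
    rw [hb]
    have : 0 < 1 / ((2 * d + 1 : ℕ) : ℝ) ^ 2 := by positivity
    linarith
  have hcont : ContinuousOn (auxPhi d) (Icc a b) :=
    auxPhi_contOn d (fun x hx => lt_of_le_of_lt hx.2 hb1)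
  have hmem : (0 : ℝ) ∈ Ioo (auxPhi d a) (auxPhi d b) :=
    ⟨auxPhi_neg_at_a d hd, auxPhi_pos_at_b d hd⟩
  obtain ⟨t0, ht0mem, ht0⟩ := intermediate_value_Ioo (le_of_lt hab) hcont hmem
  have ht0a : a < t0 := ht0mem.1
  have ht0b : t0 < b := ht0mem.2
  refine ⟨t0, lt_trans ha0 ht0a, lt_trans ht0b hb1, ht0, ?_, ?_⟩
  · intro u hu0 hut0
    rcases le_or_gt u a with hua | hua
    · have := auxPhi_strictAntiOn d hd (left_mem_Icc.mpr (le_of_lt ha0))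
        ⟨le_of_lt hu0, hua⟩ hu0
      rwa [auxPhi_zero] at this
    · have := auxPhi_strictMonoOn d hd ⟨le_of_lt hua, by linarith [lt_trans ht0b hb1]⟩
        ⟨le_of_lt ht0a, lt_trans ht0b hb1⟩ hut0
      rwa [ht0] at this
  · intro u ht0u hu1
    have := auxPhi_strictMonoOn d hd ⟨le_of_lt ht0a, lt_trans ht0b hb1⟩
      ⟨by rw [← ha]; linarith, hu1⟩ ht0u
    rwa [ht0] at this

lemma auxH_contOn (d : ℕ) (hd : 2 ≤ d) {s : Set ℝ} (hs : s ⊆ Ioo 0 1) :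
    ContinuousOn (auxH d) s :=
  fun x hx => ((auxH_hasDerivAt d hd (hs hx).1 (hs hx).2).continuousAt).continuousWithinAt

lemma auxH_strictAntiOn (d : ℕ) (hd : 2 ≤ d) {t0 : ℝ} (ht00 : 0 < t0) (ht01 : t0 < 1)
    (hneg : ∀ u, 0 < u → u < t0 → auxPhi d u < 0) :
    StrictAntiOn (auxH d) (Ioc 0 t0) := by
  apply strictAntiOn_of_deriv_neg (convex_Ioc _ _)
    (auxH_contOn d hd (fun x hx => ⟨hx.1, lt_of_le_of_lt hx.2 ht01⟩))
  intro x hx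
  rw [interior_Ioc] at hx
  rw [(auxH_hasDerivAt d hd hx.1 (lt_trans hx.2 ht01)).deriv]
  exact div_neg_of_neg_of_pos (hneg x hx.1 hx.2) (pow_pos hx.1 _)

lemma auxH_strictMonoOn (d : ℕ) (hd : 2 ≤ d) {t0 : ℝ} (ht00 : 0 < t0)
    (hpos : ∀ u, t0 < u → u < 1 → 0 < auxPhi d u) :
    StrictMonoOn (auxH d) (Ico t0 1) := by
  apply strictMonoOn_of_deriv_pos (convex_Ico _ _)
    (auxH_contOn d hd (fun x hx => ⟨lt_of_lt_of_le ht00 hx.1, hx.2⟩))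
  intro x hx
  rw [interior_Ico] at hx
  rw [(auxH_hasDerivAt d hd (lt_trans ht00 hx.1) hx.2).deriv]
  exact div_pos (hpos x hx.1 hx.2) (pow_pos (lt_trans ht00 hx.1) _)

lemma fixed_iff (d : ℕ) (c : ℝ) {u : ℝ} (hu0 : 0 < u) (hu1 : u < 1) :
    (1 - Real.exp (-c * u ^ d) = u) ↔ auxH d u = c := by
  have h1u : 0 < 1 - u := by linarith
  have hud : (0 : ℝ) < u ^ d := by positivity
  constructor
  · intro h
    have hexp : Real.exp (-c * u ^ d) = 1 - u := by linarith
    have hlog : -c * u ^ d = Real.log (1 - u) := by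
      rw [← hexp, Real.log_exp]
    rw [auxH, ← hlog]
    field_simp
  · intro h
    rw [auxH] at h
    have hlog : Real.log (1 - u) = -c * u ^ d := by
      field_simp at h
      linarith
    have : Real.exp (-c * u ^ d) = 1 - u := by
      rw [← hlog, Real.exp_log h1u]
    linarith

lemma auxH_ge_inv (d : ℕ) (hd : 2 ≤ d) {u : ℝ} (hu0 : 0 < u) (hu1 : u < 1) :
    1 / u ≤ auxH d u := by
  have h1u : 0 < 1 - u := by linarith
  have hlog : Real.log (1 - u) ≤ -u := by
    have := Real.log_le_sub_one_of_pos h1u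
    linarith
  have hpow : u ^ d ≤ u ^ 2 :=
    pow_le_pow_of_le_one (le_of_lt hu0) (le_of_lt hu1) hd
  have hud : (0 : ℝ) < u ^ d := by positivity
  have h1 : u ≤ -Real.log (1 - u) := by linarith
  calc 1 / u = u / u ^ 2 := by rw [pow_two]; field_simp
  _ ≤ u / u ^ d := div_le_div_of_nonneg_left (le_of_lt hu0) hud hpow
  _ ≤ -Real.log (1 - u) / u ^ d := by gcongr

lemma auxH_ge_neglog (d : ℕ) {u : ℝ} (hu0 : 0 < u) (hu1 : u < 1) :
    -Real.log (1 - u) ≤ auxH d u := by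
  have h1u : 0 < 1 - u := by linarith
  have hlognn : 0 ≤ -Real.log (1 - u) := by
    have h : Real.log (1 - u) ≤ 0 := Real.log_nonpos (by linarith) (by linarith)
    linarith
  have hud1 : u ^ d ≤ 1 := pow_le_one₀ (le_of_lt hu0) (le_of_lt hu1)
  have hud0 : (0 : ℝ) < u ^ d := pow_pos hu0 _
  calc -Real.log (1 - u) = -Real.log (1 - u) / 1 := by ring
  _ ≤ -Real.log (1 - u) / u ^ d := by gcongr

/-- For every integer `d ≥ 2` there exists `c_coll > 0` such that: for `0 < c < c_coll`
the only solution `t ∈ [0,1]` of `1 - exp(-c t^d) = t` is `t = 0`; and for `c > c_coll`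
there are exactly two solutions `t ∈ (0,1)`. -/
theorem exists_collapse_threshold (d : ℕ) (hd : 2 ≤ d) :
    ∃ ccoll : ℝ, 0 < ccoll ∧
      (∀ c : ℝ, 0 < c → c < ccoll →
        ∀ t ∈ Set.Icc (0 : ℝ) 1, 1 - Real.exp (-c * t ^ d) = t → t = 0) ∧
      (∀ c : ℝ, ccoll < c →
        ∃ s t : ℝ, s ∈ Set.Ioo (0 : ℝ) 1 ∧ t ∈ Set.Ioo (0 : ℝ) 1 ∧ s ≠ t ∧
          1 - Real.exp (-c * s ^ d) = s ∧ 1 - Real.exp (-c * t ^ d) = t ∧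
          ∀ u ∈ Set.Ioo (0 : ℝ) 1, 1 - Real.exp (-c * u ^ d) = u → u = s ∨ u = t) := by
  obtain ⟨t0, ht00, ht01, hphi0, hneg, hpos⟩ := exists_t0 d hd
  have hanti := auxH_strictAntiOn d hd ht00 ht01 hneg
  have hmono := auxH_strictMonoOn d hd ht00 hpos
  set ccoll : ℝ := auxH d t0 with hc
  have hccoll : 0 < ccoll := by
    rw [hc, auxH]
    have : Real.log (1 - t0) < 0 := Real.log_neg (by linarith) (by linarith)
    exact div_pos (by linarith) (pow_pos ht00 _)
  refine ⟨ccoll, hccoll, ?_, ?_⟩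
  · -- subcritical: only solution is 0
    intro c hc0 hcc t ht hfix
    by_contra ht0'
    have ht0pos : 0 < t := lt_of_le_of_ne ht.1 (Ne.symm ht0')
    have ht1 : t < 1 := by
      rcases lt_or_eq_of_le ht.2 with h | h
      · exact h
      · exfalso
        rw [h] at hfix
        have : Real.exp (-c * 1 ^ d) = 0 := by linarith
        exact absurd this (ne_of_gt (Real.exp_pos _))
    have hHt : auxH d t = c := (fixed_iff d c ht0pos ht1).mp hfix
    have : ccoll ≤ auxH d t := by
      rcases lt_trichotomy t t0 with h | h | h
      · exact le_of_lt (hanti ⟨ht0pos, le_of_lt h⟩ ⟨ht00, le_refl _⟩ h)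
      · rw [h]
      · exact le_of_lt (hmono ⟨le_refl _, ht01⟩ ⟨le_of_lt h, ht1⟩ h)
    rw [hHt] at this
    linarith
  · -- supercritical: exactly two solutions
    intro c hcc
    have hc0 : 0 < c := lt_trans hccoll hcc
    -- left solution
    set ε : ℝ := min t0 (1 / (c + 1)) / 2 with he
    have hε0 : 0 < ε := by
      rw [he]
      have : 0 < min t0 (1 / (c + 1)) := lt_min ht00 (by positivity)
      linarith
    have hεt0 : ε < t0 := by
      rw [he]
      have h1 : min t0 (1 / (c + 1)) ≤ t0 := min_le_left _ _
      linarith [min_le_left t0 (1 / (c + 1))]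
    have hε1 : ε < 1 := lt_trans hεt0 ht01
    have hHε : c < auxH d ε := by
      have h1 : 1 / ε ≤ auxH d ε := auxH_ge_inv d hd hε0 hε1
      have h2 : ε < 1 / (c + 1) := by
        rw [he]
        have := min_le_right t0 (1 / (c + 1))
        have : 0 < min t0 (1 / (c + 1)) := lt_min ht00 (by positivity)
        linarith [min_le_right t0 (1 / (c + 1))]
      have h3 : c + 1 < 1 / ε := by
        rw [lt_div_iff₀ hε0]
        have hinv : (c + 1) * (1 / (c + 1)) = 1 := by field_simp
        nlinarith [mul_lt_mul_of_pos_left h2 (by positivity : (0:ℝ) < c + 1)]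
      linarith
    have hcIoo : c ∈ Ioo (auxH d t0) (auxH d ε) := ⟨hcc, hHε⟩
    obtain ⟨s, hsmem, hs⟩ := intermediate_value_Ioo' (le_of_lt hεt0)
      (auxH_contOn d hd (fun x hx => ⟨lt_of_lt_of_le hε0 hx.1, lt_of_le_of_lt hx.2 ht01⟩))
      hcIoo
    have hs0 : 0 < s := lt_trans hε0 hsmem.1
    have hst0 : s < t0 := hsmem.2
    have hs1 : s < 1 := lt_trans hst0 ht01
    -- right solution
    set M : ℝ := max t0 (1 - Real.exp (-(c + 1))) with hM
    have hM1 : M < 1 := by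
      rw [hM]
      apply max_lt ht01
      have := Real.exp_pos (-(c + 1))
      linarith
    set b : ℝ := (M + 1) / 2 with hbdef
    have hbt0 : t0 < b := by
      have h1 : t0 ≤ M := le_max_left _ _
      rw [hbdef]; linarith
    have hb1 : b < 1 := by rw [hbdef]; linarith
    have hb0 : 0 < b := lt_trans ht00 hbt0
    have hHb : c < auxH d b := by
      have h1 : 1 - b ≤ Real.exp (-(c + 1)) := by
        have h2 : 1 - Real.exp (-(c + 1)) ≤ M := le_max_right _ _
        rw [hbdef]; linarith
      have h2 : Real.log (1 - b) ≤ -(c + 1) := by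
        calc Real.log (1 - b) ≤ Real.log (Real.exp (-(c + 1))) :=
          Real.log_le_log (by linarith) h1
        _ = -(c + 1) := Real.log_exp _
      have h3 : c + 1 ≤ -Real.log (1 - b) := by linarith
      have h4 := auxH_ge_neglog d hb0 hb1
      linarith
    have hcIoo2 : c ∈ Ioo (auxH d t0) (auxH d b) := ⟨hcc, hHb⟩
    obtain ⟨t, htmem, ht⟩ := intermediate_value_Ioo (le_of_lt hbt0)
      (auxH_contOn d hd (fun x hx => ⟨lt_of_lt_of_le ht00 hx.1, lt_of_le_of_lt hx.2 hb1⟩))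
      hcIoo2
    have ht0t : t0 < t := htmem.1
    have ht1 : t < 1 := lt_trans htmem.2 hb1
    have htpos : 0 < t := lt_trans ht00 ht0t
    refine ⟨s, t, ⟨hs0, hs1⟩, ⟨htpos, ht1⟩, ne_of_lt (lt_trans hst0 ht0t),
      (fixed_iff d c hs0 hs1).mpr hs, (fixed_iff d c htpos ht1).mpr ht, ?_⟩
    intro u hu hufix
    have hHu : auxH d u = c := (fixed_iff d c hu.1 hu.2).mp hufix
    rcases lt_trichotomy u t0 with h | h | h
    · left
      exact hanti.injOn ⟨hu.1, le_of_lt h⟩ ⟨hs0, le_of_lt hst0⟩ (by rw [hHu, hs])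
    · exfalso
      rw [h] at hHu
      rw [← hHu] at hcc
      exact lt_irrefl _ hcc
    · right
      exact hmono.injOn ⟨le_of_lt h, hu.2⟩ ⟨le_of_lt ht0t, ht1⟩ (by rw [hHu, ht])
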